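/- For all positive integers n, every target t ∈ ℝ, and all 1-dense sets X_1, …, X_{n-1} ⊆ ℝ, there exist real numbers p_0, p_1, …, p_n and a real number s such that p_0 = 0, p_n = t, p_i ∈ X_i for all 1 ≤ i ≤ n−1, and |(p_{i+1} − p_i) − s| ≤ 1 for all 0 ≤ i ≤ n−1. (In particular, the one-dimensional discrepancy constant satisfies D_1' ≤ 2.) -/

import Mathlib

/-- A set `X ⊆ ℝ` is 1-dense if every real is at distance `< 1` from `X`. -/
def IsOneDense (X : Set ℝ) : Prop := ∀ y : ℝ, ∃ x ∈ X, |y - x| < 1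

namespace Stmt10Aux

/-- Reachable set: points reachable from `0` in `i` steps, the `j`-th step landing
in `X j`, each step within distance `< 1` of `s`. -/
def Sset (X : ℕ → Set ℝ) : ℕ → ℝ → Set ℝ
  | 0, _ => {0}
  | i+1, s => {y | y ∈ X (i+1) ∧ ∃ w ∈ Sset X i s, |y - w - s| < 1}

variable {X : ℕ → Set ℝ}

lemma dense_near {Y : Set ℝ} (h : IsOneDense Y) (c : ℝ) : ∃ y ∈ Y, |y - c| < 1 := by
  obtain ⟨x, hx, hd⟩ := h c
  exact ⟨x, hx, by rwa [abs_sub_comm]⟩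

lemma mem_zero {s x : ℝ} : x ∈ Sset X 0 s ↔ x = 0 := Set.mem_singleton_iff

lemma mem_succ {i : ℕ} {s y : ℝ} :
    y ∈ Sset X (i+1) s ↔ y ∈ X (i+1) ∧ ∃ w ∈ Sset X i s, |y - w - s| < 1 := Iff.rfl

lemma Sset_nonempty (hd : ∀ j, IsOneDense (X j)) (i : ℕ) (s : ℝ) :
    ∃ x, x ∈ Sset X i s := by
  induction i with
  | zero => exact ⟨0, rfl⟩
  | succ i ih =>
    obtain ⟨w, hw⟩ := ih
    obtain ⟨y, hy, hyd⟩ := dense_near (hd (i+1)) (w + s)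
    refine ⟨y, mem_succ.mpr ⟨hy, w, hw, ?_⟩⟩
    rwa [show y - w - s = y - (w + s) by ring]

lemma Sset_bound {i : ℕ} {s x : ℝ} (hx : x ∈ Sset X i s) : |x - i * s| ≤ i := by
  induction i generalizing x with
  | zero =>
    rw [mem_zero] at hx
    simp [hx]
  | succ i ih =>
    obtain ⟨-, w, hw, hdist⟩ := mem_succ.mp hx
    have hb := abs_le.mp (ih hw)
    have h1 := abs_lt.mp hdist
    rw [abs_le]
    push_cast
    push_cast at hb
    constructor <;> nlinarith [hb.1, hb.2, h1.1, h1.2]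

lemma Sset_mono_up (hd : ∀ j, IsOneDense (X j)) {i : ℕ} {s s' x : ℝ} (hss : s ≤ s')
    (hx : x ∈ Sset X i s) : ∃ x' ∈ Sset X i s', x ≤ x' := by
  induction i generalizing x with
  | zero =>
    rw [mem_zero] at hx
    exact ⟨0, rfl, le_of_eq hx⟩
  | succ i ih =>
    obtain ⟨hxX, w, hw, hdist⟩ := mem_succ.mp hx
    obtain ⟨w', hw', hww'⟩ := ih hw
    have h1 := abs_lt.mp hdist
    by_cases hcase : |x - w' - s'| < 1
    · exact ⟨x, mem_succ.mpr ⟨hxX, w', hw', hcase⟩, le_rfl⟩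
    · have hle : x ≤ w' + s' - 1 := by
        rcases le_or_gt x (w' + s' - 1) with h | h
        · exact h
        · exact absurd (abs_lt.mpr ⟨by linarith, by linarith⟩) hcase
      obtain ⟨y, hy, hyd⟩ := dense_near (hd (i+1)) (w' + s')
      have h2 := abs_lt.mp hyd
      refine ⟨y, mem_succ.mpr ⟨hy, w', hw', abs_lt.mpr ⟨by linarith, by linarith⟩⟩, by linarith⟩

lemma Sset_mono_down (hd : ∀ j, IsOneDense (X j)) {i : ℕ} {s s' x : ℝ} (hss : s' ≤ s)
    (hx : x ∈ Sset X i s) : ∃ x' ∈ Sset X i s', x' ≤ x := by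
  induction i generalizing x with
  | zero =>
    rw [mem_zero] at hx
    exact ⟨0, rfl, le_of_eq hx.symm⟩
  | succ i ih =>
    obtain ⟨hxX, w, hw, hdist⟩ := mem_succ.mp hx
    obtain ⟨w', hw', hww'⟩ := ih hw
    have h1 := abs_lt.mp hdist
    by_cases hcase : |x - w' - s'| < 1
    · exact ⟨x, mem_succ.mpr ⟨hxX, w', hw', hcase⟩, le_rfl⟩
    · have hle : w' + s' + 1 ≤ x := by
        rcases le_or_gt (w' + s' + 1) x with h | h
        · exact h
        · exact absurd (abs_lt.mpr ⟨by linarith, by linarith⟩) hcase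
      obtain ⟨y, hy, hyd⟩ := dense_near (hd (i+1)) (w' + s')
      have h2 := abs_lt.mp hyd
      refine ⟨y, mem_succ.mpr ⟨hy, w', hw', abs_lt.mpr ⟨by linarith, by linarith⟩⟩, by linarith⟩

/-- Mesh lemma: the reachable set has no gaps of length more than 2 within its span. -/
lemma Sset_mesh (hd : ∀ j, IsOneDense (X j)) {i : ℕ} {s : ℝ} :
    ∀ {p q z : ℝ}, p ∈ Sset X i s → q ∈ Sset X i s → p ≤ z → z ≤ q →
      ∃ x ∈ Sset X i s, |z - x| < 1 := by
  induction i with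
  | zero =>
    intro p q z hp hq hpz hzq
    rw [mem_zero] at hp hq
    refine ⟨0, rfl, ?_⟩
    have : z = 0 := le_antisymm (hq ▸ hzq) (hp ▸ hpz)
    simp [this]
  | succ i ih =>
    intro p q z hp hq hpz hzq
    by_cases hgood : ∃ x ∈ Sset X (i+1) s, |z - x| < 1
    · exact hgood
    exfalso
    push_neg at hgood
    obtain ⟨hpX, a, ha, hpa⟩ := mem_succ.mp hp
    obtain ⟨hqX, b, hb, hqb⟩ := mem_succ.mp hq
    have hzp : p + 1 ≤ z := by
      have h := hgood p hp
      rcases le_abs.mp h with h' | h' <;> linarith [abs_nonneg (z - p)]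
    have hzq' : z + 1 ≤ q := by
      have h := hgood q hq
      rcases le_abs.mp h with h' | h' <;> linarith
    obtain ⟨y, hy, hyd⟩ := dense_near (hd (i+1)) z
    have hyz := abs_lt.mp hyd
    have hpa' := abs_lt.mp hpa
    have hqb' := abs_lt.mp hqb
    by_cases hca : |y - a - s| < 1
    · have hyS : y ∈ Sset X (i+1) s := mem_succ.mpr ⟨hy, a, ha, hca⟩
      have := hgood y hyS
      have : |z - y| < 1 := by rw [abs_sub_comm]; exact hyd
      linarith [hgood y hyS]
    by_cases hcb : |y - b - s| < 1
    · have hyS : y ∈ Sset X (i+1) s := mem_succ.mpr ⟨hy, b, hb, hcb⟩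
      have : |z - y| < 1 := by rw [abs_sub_comm]; exact hyd
      linarith [hgood y hyS]
    -- y - s is between a and b
    have hya : a + 1 ≤ y - s := by
      have hgt : a - 1 < y - s := by linarith
      rcases le_or_gt (a + 1) (y - s) with h | h
      · exact h
      · exact absurd (abs_lt.mpr ⟨by linarith, by linarith⟩) hca
    have hyb : y - s ≤ b - 1 := by
      have hlt : y - s < b + 1 := by linarith
      rcases le_or_gt (y - s) (b - 1) with h | h
      · exact h
      · exact absurd (abs_lt.mpr ⟨by linarith, by linarith⟩) hcb
    obtain ⟨w, hw, hwd⟩ := ih ha hb (show a ≤ y - s by linarith) (show y - s ≤ b by linarith)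
    have hwd' := abs_lt.mp hwd
    have hyS : y ∈ Sset X (i+1) s :=
      mem_succ.mpr ⟨hy, w, hw, abs_lt.mpr ⟨by linarith, by linarith⟩⟩
    have : |z - y| < 1 := by rw [abs_sub_comm]; exact hyd
    linarith [hgood y hyS]

/-- Membership in the reachable set is an open condition in `s`. -/
lemma Sset_persist {i : ℕ} {s x : ℝ} (hx : x ∈ Sset X i s) :
    ∃ η > 0, ∀ s', |s' - s| < η → x ∈ Sset X i s' := by
  induction i generalizing x with
  | zero => exact ⟨1, one_pos, fun s' _ => hx⟩
  | succ i ih =>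
    obtain ⟨hxX, w, hw, hdist⟩ := mem_succ.mp hx
    obtain ⟨η, hηpos, hper⟩ := ih hw
    refine ⟨min η (1 - |x - w - s|), lt_min hηpos (by linarith), fun s' hs' => ?_⟩
    have h1 : |s' - s| < η := lt_of_lt_of_le hs' (min_le_left _ _)
    have h2 : |s' - s| < 1 - |x - w - s| := lt_of_lt_of_le hs' (min_le_right _ _)
    refine mem_succ.mpr ⟨hxX, w, hper s' h1, ?_⟩
    have habs : |x - w - s'| ≤ |x - w - s| + |s - s'| := by
      calc |x - w - s'| = |(x - w - s) + (s - s')| := by ring_nf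
        _ ≤ |x - w - s| + |s - s'| := abs_add_le _ _
    have hcomm : |s - s'| = |s' - s| := abs_sub_comm _ _
    linarith

/-- Extract an explicit chain from membership in the reachable set. -/
lemma Sset_chain {i : ℕ} {s x : ℝ} (hx : x ∈ Sset X i s) :
    ∃ p : ℕ → ℝ, p 0 = 0 ∧ p i = x ∧ (∀ j, 1 ≤ j → j ≤ i → p j ∈ X j) ∧
      (∀ j, j < i → |p (j+1) - p j - s| < 1) := by
  induction i generalizing x with
  | zero =>
    rw [mem_zero] at hx
    exact ⟨fun _ => 0, rfl, hx.symm, fun j h1 h2 => absurd h2 (by omega),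
      fun j hj => absurd hj (by omega)⟩
  | succ i ih =>
    obtain ⟨hxX, w, hw, hdist⟩ := mem_succ.mp hx
    obtain ⟨p, hp0, hpi, hpmem, hpstep⟩ := ih hw
    refine ⟨fun j => if j = i+1 then x else p j, ?_, ?_, ?_, ?_⟩
    · simp [hp0]
    · simp
    · intro j h1 h2
      by_cases hj : j = i + 1
      · simpa [hj] using hxX
      · have : j ≤ i := by omega
        simpa [hj] using hpmem j h1 this
    · intro j hj
      rcases Nat.lt_succ_iff_lt_or_eq.mp hj with h | h
      · have hne1 : j + 1 ≠ i + 1 := by omega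
        have hne2 : j ≠ i + 1 := by omega
        simpa [hne1, hne2, show j ≠ i by omega] using hpstep j h
      · subst h
        have hne : j ≠ j + 1 := by omega
        simpa [hne, hpi] using hdist

end Stmt10Aux

open Stmt10Aux in
theorem stmt10 (n : ℕ) (hn : 0 < n) (t : ℝ)
    (X : ℕ → Set ℝ) (hX : ∀ i, 1 ≤ i → i ≤ n - 1 → IsOneDense (X i)) :
    ∃ (p : ℕ → ℝ) (s : ℝ),
      p 0 = 0 ∧ p n = t ∧
      (∀ i, 1 ≤ i → i ≤ n - 1 → p i ∈ X i) ∧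
      (∀ i, i ≤ n - 1 → |(p (i + 1) - p i) - s| ≤ 1) := by
  obtain ⟨m, rfl⟩ : ∃ m, n = m + 1 := ⟨n - 1, by omega⟩
  simp only [Nat.add_sub_cancel] at hX ⊢
  -- replace X by a version that is 1-dense at every index
  set Y : ℕ → Set ℝ := fun j => if 1 ≤ j ∧ j ≤ m then X j else Set.univ with hY
  have hd : ∀ j, IsOneDense (Y j) := by
    intro j
    by_cases h : 1 ≤ j ∧ j ≤ m
    · simpa [hY, h] using hX j h.1 h.2
    · intro y
      exact ⟨y, by simp [hY, h], by simp⟩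
  -- key existence via the sweep argument
  have key : ∃ s, ∃ x ∈ Sset Y m s, |t - s - x| ≤ 1 := by
    by_contra hfail
    push_neg at hfail
    set A : Set ℝ := {s : ℝ | ∀ x ∈ Sset Y m s, x < t - s - 1} with hA
    set B : Set ℝ := {s : ℝ | ∀ x ∈ Sset Y m s, t - s + 1 < x} with hB
    have hnonemp : ∀ s : ℝ, ∃ x, x ∈ Sset Y m s := fun s => Sset_nonempty hd m s
    -- every s is in A or B
    have hpart : ∀ s : ℝ, s ∈ A ∨ s ∈ B := by
      intro s
      by_cases hsA : s ∈ A
      · exact Or.inl hsA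
      right
      rw [hA, Set.mem_setOf_eq] at hsA
      push_neg at hsA
      obtain ⟨x₀, hx₀S, hx₀ge⟩ := hsA
      have hx₀big : t - s + 1 < x₀ := by
        have h := hfail s x₀ hx₀S
        rcases lt_abs.mp h with h' | h' <;> linarith
      intro x hxS
      rcases lt_abs.mp (hfail s x hxS) with h' | h'
      · -- x < t - s - 1 : contradiction via mesh
        exfalso
        obtain ⟨w, hwS, hwd⟩ := Sset_mesh hd hxS hx₀S (show x ≤ t - s by linarith)
          (show t - s ≤ x₀ by linarith)
        have h2 := hfail s w hwS
        rcases abs_lt.mp hwd with ⟨hl, hr⟩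
        rcases lt_abs.mp h2 with h3 | h3 <;> linarith
      · linarith
    -- A contains small s
    have hAlow : (t / ((m:ℝ)+1) - 2) ∈ A := by
      rw [hA, Set.mem_setOf_eq]
      intro x hx
      have hb := abs_le.mp (Sset_bound hx)
      set s : ℝ := t / ((m:ℝ)+1) - 2 with hs
      have hts : ((m:ℝ)+1) * (t / ((m:ℝ)+1)) = t := by field_simp
      have : ((m:ℝ)+1) * s = t - 2*((m:ℝ)+1) := by rw [hs]; rw [mul_sub, hts]; ring
      nlinarith [hb.1, hb.2, (Nat.cast_nonneg m : (0:ℝ) ≤ (m:ℝ))]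
    have hBhigh : (t / ((m:ℝ)+1) + 2) ∈ B := by
      rw [hB, Set.mem_setOf_eq]
      intro x hx
      have hb := abs_le.mp (Sset_bound hx)
      set s : ℝ := t / ((m:ℝ)+1) + 2 with hs
      have hts : ((m:ℝ)+1) * (t / ((m:ℝ)+1)) = t := by field_simp
      have : ((m:ℝ)+1) * s = t + 2*((m:ℝ)+1) := by rw [hs]; rw [mul_add, hts]; ring
      nlinarith [hb.1, hb.2, (Nat.cast_nonneg m : (0:ℝ) ≤ (m:ℝ))]
    -- elements of A are ≤ elements of B
    have hAB_le : ∀ a ∈ A, ∀ b ∈ B, a ≤ b := by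
      intro a ha b hb
      by_contra hab
      push_neg at hab -- b < a
      obtain ⟨x, hx⟩ := hnonemp b
      have h1 : t - b + 1 < x := hb x hx
      obtain ⟨x', hx', hle⟩ := Sset_mono_up hd (le_of_lt hab) hx
      have h2 : x' < t - a - 1 := ha x' hx'
      linarith
    have hAne : A.Nonempty := ⟨_, hAlow⟩
    have hbdd : BddAbove A := ⟨t / ((m:ℝ)+1) + 2, fun a ha => hAB_le a ha _ hBhigh⟩
    set s₀ := sSup A with hs₀
    obtain ⟨x₀, hx₀⟩ := hnonemp s₀
    obtain ⟨η, hηpos, hper⟩ := Sset_persist hx₀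
    have hmin : (0:ℝ) < min η 1 / 2 := by positivity
    have hminη : min η 1 / 2 < η := by
      have : min η 1 ≤ η := min_le_left _ _
      linarith
    have hmin1 : min η 1 / 2 ≤ 1 := by
      have : min η 1 ≤ 1 := min_le_right _ _
      linarith
    rcases hpart s₀ with hc | hc
    · -- s₀ ∈ A ; move right
      set s₁ := s₀ + min η 1 / 2 with hs₁
      have hx₀' : x₀ ∈ Sset Y m s₁ := by
        apply hper
        rw [show s₁ - s₀ = min η 1 / 2 by rw [hs₁]; ring, abs_of_pos hmin]
        exact hminη
      have hs₁B : s₁ ∈ B := by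
        rcases hpart s₁ with h | h
        · exfalso
          have : s₁ ≤ s₀ := le_csSup hbdd h
          have : s₀ < s₁ := by rw [hs₁]; linarith
          linarith
        · exact h
      have h1 : x₀ < t - s₀ - 1 := hc x₀ hx₀
      have h2 : t - s₁ + 1 < x₀ := hs₁B x₀ hx₀'
      have : s₁ ≤ s₀ + 1 := by rw [hs₁]; linarith
      linarith
    · -- s₀ ∈ B ; move left
      set s₁ := s₀ - min η 1 / 2 with hs₁
      have hx₀' : x₀ ∈ Sset Y m s₁ := by
        apply hper
        rw [show s₁ - s₀ = -(min η 1 / 2) by rw [hs₁]; ring, abs_neg, abs_of_pos hmin]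
        exact hminη
      have hs₁lt : s₁ < s₀ := by rw [hs₁]; linarith
      obtain ⟨a, haA, hlt⟩ := exists_lt_of_lt_csSup hAne hs₁lt
      have hs₁A : s₁ ∈ A := by
        rw [hA, Set.mem_setOf_eq]
        intro x hx
        obtain ⟨x', hx', hle⟩ := Sset_mono_up hd (le_of_lt hlt) hx
        have := haA x' hx'
        linarith
      have h1 : x₀ < t - s₁ - 1 := hs₁A x₀ hx₀'
      have h2 : t - s₀ + 1 < x₀ := hc x₀ hx₀
      have : s₀ - s₁ ≤ 1 := by rw [hs₁]; linarith
      linarith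
  -- assemble the chain
  obtain ⟨s, x₀, hx₀, hclose⟩ := key
  obtain ⟨p, hp0, hpm, hpmem, hpstep⟩ := Sset_chain hx₀
  refine ⟨fun j => if j = m + 1 then t else p j, s, ?_, ?_, ?_, ?_⟩
  · simp [hp0]
  · simp
  · intro i h1 h2
    have hne : i ≠ m + 1 := by omega
    have hmem : p i ∈ Y i := hpmem i h1 h2
    rw [hY] at hmem
    simp only [h1, h2, and_self, if_true] at hmem
    simpa [hne] using hmem
  · intro i hi
    rcases Nat.lt_or_ge i m with h | h
    · have hne1 : i + 1 ≠ m + 1 := by omega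
      have hne2 : i ≠ m + 1 := by omega
      have := le_of_lt (hpstep i h)
      simpa [hne1, hne2, show i ≠ m by omega] using this
    · have him : i = m := by omega
      subst him
      have hne : i ≠ i + 1 := by omega
      have e1 : (fun j => if j = i + 1 then t else p j) (i + 1) = t := by simp
      have e2 : (fun j => if j = i + 1 then t else p j) i = x₀ := by simp [hne, hpm]
      rw [e1, e2, show t - x₀ - s = t - s - x₀ by ring]
      exact hclose
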